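/- Define w_m = ∫_{-1}^1 ((P_{2m}(x) - P_{2m}(0))/x)^2 dx, where P_k is the k-th Legendre polynomial. Then the sequence (w_m) satisfies the recurrence 4(m+1)^2 w_{m+1} = 2(4m+3) + (2m+1)^2 w_m for all m ≥ 0, with initial condition w_0 = 0. -/

import Mathlib

open MeasureTheory Real

/-- The Legendre polynomials, defined by the three-term recurrence
`(n+1) P_{n+1}(x) = (2n+1) x P_n(x) - n P_{n-1}(x)` with `P_0 = 1`, `P_1 = x`. -/
noncomputable def legendreP : ℕ → ℝ → ℝ
  | 0, _ => 1
  | 1, x => x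
  | n + 2, x =>
      ((2 * (n : ℝ) + 3) * x * legendreP (n + 1) x - ((n : ℝ) + 1) * legendreP n x) / ((n : ℝ) + 2)

/-- `w m = ∫_{-1}^1 ((P_{2m}(x) - P_{2m}(0))/x)^2 dx`. -/
noncomputable def legendreW (m : ℕ) : ℝ :=
  ∫ x in (-1 : ℝ)..1, ((legendreP (2 * m) x - legendreP (2 * m) 0) / x) ^ 2

open Nat Polynomial

noncomputable def legPoly : ℕ → Polynomial ℝ
  | 0 => 1
  | 1 => X
  | n + 2 => C (((n : ℝ) + 2)⁻¹) *
      (C (2 * (n : ℝ) + 3) * X * legPoly (n + 1) - C ((n : ℝ) + 1) * legPoly n)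

lemma legendreP_eval : ∀ (n : ℕ) (x : ℝ), legendreP n x = (legPoly n).eval x
  | 0, x => by simp [legendreP, legPoly]
  | 1, x => by simp [legendreP, legPoly]
  | n + 2, x => by
      rw [legendreP, legPoly]
      simp only [Polynomial.eval_mul, Polynomial.eval_sub, Polynomial.eval_C, Polynomial.eval_X,
        legendreP_eval (n + 1) x, legendreP_eval n x]
      field_simp

lemma legendreP_continuous (n : ℕ) : Continuous (legendreP n) := by
  have : legendreP n = fun x => (legPoly n).eval x := funext (legendreP_eval n)
  rw [this]
  exact (legPoly n).continuous

lemma legendreP_neg : ∀ (n : ℕ) (x : ℝ), legendreP n (-x) = (-1) ^ n * legendreP n x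
  | 0, x => by simp [legendreP]
  | 1, x => by simp [legendreP]
  | n + 2, x => by
      rw [legendreP, legendreP, legendreP_neg (n + 1) x, legendreP_neg n x]
      ring

/-- moments of Legendre polynomials -/
noncomputable def legM (n k : ℕ) : ℝ := ∫ x in (-1 : ℝ)..1, x ^ k * legendreP n x

lemma legM_intg (n k : ℕ) (a b : ℝ) :
    IntervalIntegrable (fun x : ℝ => x ^ k * legendreP n x) volume a b :=
  ((continuous_pow k).mul (legendreP_continuous n)).intervalIntegrable a b

lemma legM_odd (n k : ℕ) (h : (n + k) % 2 = 1) : legM n k = 0 := by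
  have hodd : Odd (n + k) := Nat.odd_iff.mpr h
  set f : ℝ → ℝ := fun x => x ^ k * legendreP n x with hf
  have h1 : (∫ x in (-1 : ℝ)..1, f (-x)) = ∫ x in (-1 : ℝ)..1, f x := by
    simpa using intervalIntegral.integral_comp_neg (a := (-1 : ℝ)) (b := 1) f
  have h2 : ∀ x, f (-x) = -f x := by
    intro x
    have hne : ((-1 : ℝ)) ^ (n + k) = -1 := hodd.neg_one_pow
    rw [pow_add] at hne
    simp only [hf]
    rw [legendreP_neg, neg_pow]
    linear_combination x ^ k * legendreP n x * hne
  have h3 : (∫ x in (-1 : ℝ)..1, f (-x)) = -∫ x in (-1 : ℝ)..1, f x := by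
    simp only [h2]
    exact intervalIntegral.integral_neg
  have h4 := h1.symm.trans h3
  have : legM n k = ∫ x in (-1 : ℝ)..1, f x := rfl
  rw [this]
  linarith [h4]

/-- closed form for the moments -/
noncomputable def legF (n k : ℕ) : ℝ :=
  if (n + k) % 2 = 1 then 0
  else if k < n then 0
  else 2 * (k ! : ℝ) / (((k - n)‼ : ℝ) * ((k + n + 1)‼ : ℝ))

lemma legF_odd {n k : ℕ} (h : (n + k) % 2 = 1) : legF n k = 0 := by
  rw [legF, if_pos h]

lemma legF_lt {n k : ℕ} (h : k < n) : legF n k = 0 := by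
  simp [legF, h]


lemma legF_ge {n k : ℕ} (hpar : (n + k) % 2 = 0) (h : n ≤ k) :
    legF n k = 2 * (k ! : ℝ) / (((k - n)‼ : ℝ) * ((k + n + 1)‼ : ℝ)) := by
  rw [legF, if_neg (by omega), if_neg (by omega)]

lemma legM_rec (n k : ℕ) :
    legM (n + 2) k
      = ((2 * (n : ℝ) + 3) * legM (n + 1) (k + 1) - ((n : ℝ) + 1) * legM n k) / ((n : ℝ) + 2) := by
  have hcong : legM (n + 2) k = ∫ x in (-1 : ℝ)..1,
      ((2 * (n : ℝ) + 3) * (x ^ (k + 1) * legendreP (n + 1) x)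
        - ((n : ℝ) + 1) * (x ^ k * legendreP n x)) / ((n : ℝ) + 2) := by
    rw [legM]
    apply intervalIntegral.integral_congr
    intro x _
    show x ^ k * legendreP (n + 2) x = _
    rw [legendreP]
    ring
  rw [hcong, intervalIntegral.integral_div, intervalIntegral.integral_sub
      ((legM_intg (n + 1) (k + 1) _ _).const_mul _) ((legM_intg n k _ _).const_mul _),
    intervalIntegral.integral_const_mul, intervalIntegral.integral_const_mul]
  rfl

lemma legM_eq (n k : ℕ) : legM n k = legF n k := by
  induction n using Nat.strong_induction_on generalizing k with
  | _ n ih =>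
    match n with
    | 0 =>
      have h0 : legM 0 k = ((1 : ℝ) - (-1 : ℝ) ^ (k + 1)) / ((k : ℝ) + 1) := by
        rw [legM]
        have e : ∀ x : ℝ, x ^ k * legendreP 0 x = x ^ k := by
          intro x; rw [legendreP]; ring
        simp only [e]
        rw [integral_pow]
        norm_num
      rcases Nat.even_or_odd k with he | ho
      · have hk2 : k % 2 = 0 := Nat.even_iff.mp he
        have hm1 : (-1 : ℝ) ^ (k + 1) = -1 := Odd.neg_one_pow he.add_one
        rw [h0, hm1, legF_ge (by omega) (Nat.zero_le k)]
        have e0 : k - 0 = k := by omega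
        have e1 : k + 0 + 1 = k + 1 := by omega
        rw [e0, e1]
        have hd : ((k + 1) : ℝ) * (k ! : ℝ) = ((k + 1)‼ : ℝ) * ((k)‼ : ℝ) := by
          have := Nat.factorial_eq_mul_doubleFactorial k
          rw [Nat.factorial_succ] at this
          exact_mod_cast congrArg (Nat.cast : ℕ → ℝ) this
        rw [div_eq_div_iff (by positivity) (by positivity)]
        linear_combination (-2 : ℝ) * hd
      · have hk2 : k % 2 = 1 := Nat.odd_iff.mp ho
        have hm1 : (-1 : ℝ) ^ (k + 1) = 1 := Even.neg_one_pow ho.add_one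
        rw [h0, hm1, legF_odd (by omega)]
        ring
    | 1 =>
      have h0 : legM 1 k = ((1 : ℝ) - (-1 : ℝ) ^ (k + 1 + 1)) / ((k : ℝ) + 1 + 1) := by
        rw [legM]
        have e : ∀ x : ℝ, x ^ k * legendreP 1 x = x ^ (k + 1) := by
          intro x; rw [legendreP]; ring
        simp only [e]
        rw [integral_pow]
        norm_num
      rcases Nat.even_or_odd k with he | ho
      · have hk2 : k % 2 = 0 := Nat.even_iff.mp he
        have hm1 : (-1 : ℝ) ^ (k + 1 + 1) = 1 := Even.neg_one_pow he.add_one.add_one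
        rw [h0, hm1, legF_odd (by omega)]
        ring
      · obtain ⟨j, rfl⟩ := ho
        have hm1 : (-1 : ℝ) ^ (2 * j + 1 + 1 + 1) = -1 := Odd.neg_one_pow ⟨j + 1, by ring⟩
        rw [h0, hm1, legF_ge (by omega) (by omega)]
        have e0 : 2 * j + 1 - 1 = 2 * j := by omega
        have e2 : 2 * j + 1 + 1 + 1 = 2 * j + 1 + 2 := by omega
        rw [e0, e2, Nat.doubleFactorial_add_two]
        have hd : ((2 * j + 1)! : ℝ) = ((2 * j + 1)‼ : ℝ) * ((2 * j)‼ : ℝ) := by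
          exact_mod_cast congrArg (Nat.cast : ℕ → ℝ) (Nat.factorial_eq_mul_doubleFactorial (2 * j))
        rw [div_eq_div_iff (by positivity) (by positivity)]
        push_cast
        linear_combination (-(2 * (2 * (j : ℝ) + 3))) * hd
    | (n + 2) =>
      have ih1 := ih (n + 1) (by omega) (k + 1)
      have ih0 := ih n (by omega) k
      rw [legM_rec, ih1, ih0]
      by_cases hpar : (n + k) % 2 = 1
      · rw [legF_odd (show ((n + 1) + (k + 1)) % 2 = 1 by omega),
          legF_odd (show (n + k) % 2 = 1 by omega),
          legF_odd (show ((n + 2) + k) % 2 = 1 by omega)]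
        ring
      · have hpar0 : (n + k) % 2 = 0 := by omega
        by_cases hk : k < n
        · rw [legF_lt (show k + 1 < n + 1 by omega), legF_lt hk, legF_lt (show k < n + 2 by omega)]
          ring
        · rcases (by omega : k = n ∨ n + 2 ≤ k) with rfl | hge
          · rw [legF_lt (show k < k + 2 by omega), legF_ge (by omega) le_rfl,
              legF_ge (by omega) le_rfl]
            have e1 : k + 1 - (k + 1) = 0 := by omega
            have e2 : k - k = 0 := by omega
            have e3 : (k + 1) + (k + 1) + 1 = (k + k + 1) + 2 := by omega
            have e9 : (0 : ℕ)‼ = 1 := rfl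
            rw [e1, e2, e3, Nat.doubleFactorial_add_two (k + k + 1), e9]
            have hfac : ((k + 1)! : ℝ) = ((k : ℝ) + 1) * ((k)! : ℝ) := by
              rw [Nat.factorial_succ]; push_cast; ring
            have p1 : (0 : ℝ) < ((k + k + 1)‼ : ℝ) := by positivity
            have p3 : (0 : ℝ) < ((k)! : ℝ) := by positivity
            push_cast [hfac]
            field_simp
            ring
          · obtain ⟨j, rfl⟩ : ∃ j, k = n + 2 + j := ⟨k - (n + 2), by omega⟩
            rw [legF_ge (by omega) (by omega), legF_ge (by omega) (by omega),
              legF_ge (by omega) (by omega)]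
            have e1 : n + 2 + j - (n + 2) = j := by omega
            have e2 : n + 2 + j + 1 - (n + 1) = j + 2 := by omega
            have e3 : n + 2 + j - n = j + 2 := by omega
            have e4 : n + 2 + j + (n + 2) + 1 = (n + n + j + 3) + 2 := by omega
            have e5 : n + 2 + j + 1 + (n + 1) + 1 = (n + n + j + 3) + 2 := by omega
            have e6 : n + 2 + j + n + 1 = n + n + j + 3 := by omega
            have e7 : (j + 2)‼ = (j + 2) * j‼ := Nat.doubleFactorial_add_two j
            have e8 : (n + 2 + j + 1)! = (n + 2 + j + 1) * (n + 2 + j)! := Nat.factorial_succ _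
            rw [e1, e2, e3, e4, e5, e6, Nat.doubleFactorial_add_two (n + n + j + 3), e7, e8]
            have p1 : (0 : ℝ) < ((j)‼ : ℝ) := by positivity
            have p2 : (0 : ℝ) < (((n + n + j + 3))‼ : ℝ) := by positivity
            have p3 : (0 : ℝ) < (((n + 2 + j))! : ℝ) := by positivity
            push_cast
            field_simp
            ring

lemma legPoly_natDegree_le : ∀ n, (legPoly n).natDegree ≤ n
  | 0 => by simp [legPoly]
  | 1 => by simp [legPoly]
  | n + 2 => by
    rw [legPoly]
    refine (natDegree_C_mul_le _ _).trans ?_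
    refine (natDegree_sub_le _ _).trans ?_
    rw [max_le_iff]
    constructor
    · refine natDegree_mul_le.trans ?_
      have h1 : (C (2 * (n : ℝ) + 3) * X).natDegree ≤ 1 :=
        (natDegree_C_mul_le _ _).trans natDegree_X_le
      have h2 := legPoly_natDegree_le (n + 1)
      omega
    · refine natDegree_mul_le.trans ?_
      have h2 := legPoly_natDegree_le n
      simp only [natDegree_C]
      omega

lemma legPoly_coeff_zero (n k : ℕ) (h : n < k) : (legPoly n).coeff k = 0 :=
  coeff_eq_zero_of_natDegree_lt (lt_of_le_of_lt (legPoly_natDegree_le n) h)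

lemma legPoly_coeff_self : ∀ n, (legPoly n).coeff n = ((2 * n)! : ℝ) / (2 ^ n * ((n)! : ℝ) ^ 2)
  | 0 => by simp [legPoly]
  | 1 => by norm_num [legPoly]
  | n + 2 => by
    have h1 := legPoly_coeff_self (n + 1)
    have hz := legPoly_coeff_zero n (n + 2) (by omega)
    rw [legPoly]
    simp only [mul_assoc, coeff_C_mul, coeff_sub, coeff_X_mul]
    rw [h1, hz]
    rw [show 2 * (n + 2) = 2 * (n + 1) + 1 + 1 from by ring]
    simp only [Nat.factorial_succ]
    have p1 : (0 : ℝ) < (((n + 1))! : ℝ) := by positivity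
    push_cast
    field_simp
    ring

lemma integral_poly_mul (p : ℝ[X]) (n N : ℕ) (hN : p.natDegree < N) :
    (∫ x in (-1 : ℝ)..1, p.eval x * legendreP n x)
      = ∑ k ∈ Finset.range N, p.coeff k * legM n k := by
  have hpt : ∀ x : ℝ, p.eval x * legendreP n x
      = ∑ k ∈ Finset.range N, p.coeff k * (x ^ k * legendreP n x) := by
    intro x
    rw [Polynomial.eval_eq_sum_range' hN, Finset.sum_mul]
    refine Finset.sum_congr rfl fun k _ => by ring
  rw [intervalIntegral.integral_congr (g := fun x =>
      ∑ k ∈ Finset.range N, p.coeff k * (x ^ k * legendreP n x)) (fun x _ => hpt x)]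
  rw [intervalIntegral.integral_finset_sum (fun k _ => ((legM_intg n k _ _).const_mul _))]
  refine Finset.sum_congr rfl fun k _ => ?_
  rw [intervalIntegral.integral_const_mul]
  rfl

lemma integral_poly_mul_eq_zero (p : ℝ[X]) (n : ℕ) (h : ∀ k, n ≤ k → p.coeff k = 0) :
    (∫ x in (-1 : ℝ)..1, p.eval x * legendreP n x) = 0 := by
  rw [integral_poly_mul p n (p.natDegree + 1) (Nat.lt_succ_self _)]
  refine Finset.sum_eq_zero fun k _ => ?_
  by_cases hk : n ≤ k
  · rw [h k hk]; ring
  · rw [legM_eq, legF_lt (by omega)]; ring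

lemma integral_legPoly_sq (n : ℕ) :
    (∫ x in (-1 : ℝ)..1, (legPoly n).eval x * legendreP n x) = 2 / (2 * (n : ℝ) + 1) := by
  rw [integral_poly_mul _ n (n + 1) (lt_of_le_of_lt (legPoly_natDegree_le n) (Nat.lt_succ_self n))]
  rw [Finset.sum_range_succ]
  have hz : ∀ k ∈ Finset.range n, (legPoly n).coeff k * legM n k = 0 := by
    intro k hk
    rw [legM_eq, legF_lt (Finset.mem_range.mp hk)]
    ring
  rw [Finset.sum_eq_zero hz, zero_add, legPoly_coeff_self, legM_eq,
    legF_ge (by omega) le_rfl]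
  have e1 : n - n = 0 := by omega
  have e2 : (0 : ℕ)‼ = 1 := rfl
  rw [e1, e2]
  have key : ((n + n + 1)‼ : ℕ) * (2 ^ n * n !) = (2 * n + 1) * (2 * n)! := by
    have h1 : (2 * n + 1)! = (2 * n + 1)‼ * (2 * n)‼ := Nat.factorial_eq_mul_doubleFactorial (2 * n)
    have h2 : (2 * n)‼ = 2 ^ n * n ! := Nat.doubleFactorial_two_mul n
    have h3 : n + n + 1 = 2 * n + 1 := by ring
    have h4 : (2 * n + 1)! = (2 * n + 1) * (2 * n)! := Nat.factorial_succ _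
    rw [h3]
    calc (2 * n + 1)‼ * (2 ^ n * n !) = (2 * n + 1)‼ * (2 * n)‼ := by rw [h2]
    _ = (2 * n + 1)! := h1.symm
    _ = (2 * n + 1) * (2 * n)! := h4
  have keyR : ((n + n + 1)‼ : ℝ) * (2 ^ n * ((n)! : ℝ)) = (2 * (n : ℝ) + 1) * ((2 * n)! : ℝ) := by
    exact_mod_cast congrArg (Nat.cast : ℕ → ℝ) key
  have p1 : (0 : ℝ) < (((n + n + 1))‼ : ℝ) := by positivity
  have p2 : (0 : ℝ) < ((n)! : ℝ) := by positivity
  have p3 : (0 : ℝ) < (((2 * n))! : ℝ) := by positivity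
  rw [Nat.cast_one, one_mul]
  field_simp
  linear_combination (-1 : ℝ) * keyR

lemma X_dvd_legsub (m : ℕ) : (X : ℝ[X]) ∣ (legPoly (2 * m) - C (legendreP (2 * m) 0)) := by
  rw [Polynomial.X_dvd_iff, coeff_sub, coeff_zero_eq_eval_zero, ← legendreP_eval]
  simp

noncomputable def legQ (m : ℕ) : ℝ[X] := Classical.choose (X_dvd_legsub m)

lemma legQ_spec (m : ℕ) : legPoly (2 * m) - C (legendreP (2 * m) 0) = X * legQ m :=
  Classical.choose_spec (X_dvd_legsub m)

lemma legQ_coeff (m k : ℕ) (h : 2 * m ≤ k) : (legQ m).coeff k = 0 := by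
  have h2 := congrArg (fun p : ℝ[X] => p.coeff (k + 1)) (legQ_spec m)
  simp only [coeff_sub, coeff_X_mul, coeff_C] at h2
  rw [legPoly_coeff_zero (2 * m) (k + 1) (by omega), if_neg (by omega)] at h2
  linarith [h2]

lemma legW_eq (m : ℕ) : legendreW m = ∫ x in (-1 : ℝ)..1, ((legQ m).eval x) ^ 2 := by
  rw [legendreW]
  apply intervalIntegral.integral_congr_ae
  have h0 : ∀ᵐ (x : ℝ) ∂volume, x ≠ 0 := by
    rw [MeasureTheory.ae_iff]
    have : {x : ℝ | ¬x ≠ 0} = {0} := by ext y; simp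
    rw [this]
    exact measure_singleton 0
  filter_upwards [h0] with x hx _
  have hev : legendreP (2 * m) x - legendreP (2 * m) 0 = x * (legQ m).eval x := by
    have h2 := congrArg (eval x) (legQ_spec m)
    simpa [← legendreP_eval] using h2
  rw [hev, mul_div_cancel_left₀ _ hx]

lemma aRec (m : ℕ) :
    (2 * (m : ℝ) + 2) * legendreP (2 * (m + 1)) 0 = -((2 * (m : ℝ) + 1) * legendreP (2 * m) 0) := by
  rw [show 2 * (m + 1) = 2 * m + 2 from by ring, legendreP]
  push_cast
  field_simp
  ring

lemma keyQ (m : ℕ) :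
    C (2 * (m : ℝ) + 2) * legQ (m + 1)
      = C (4 * (m : ℝ) + 3) * legPoly (2 * m + 1) - C (2 * (m : ℝ) + 1) * legQ m := by
  have hQ1 : legPoly (2 * m + 2) - C (legendreP (2 * (m + 1)) 0) = X * legQ (m + 1) := by
    rw [show 2 * m + 2 = 2 * (m + 1) from by ring]
    exact legQ_spec (m + 1)
  have hQ0 := legQ_spec m
  have hL : legPoly (2 * m + 2) = C ((2 * (m : ℝ) + 2)⁻¹) *
      (C (4 * (m : ℝ) + 3) * X * legPoly (2 * m + 1) - C (2 * (m : ℝ) + 1) * legPoly (2 * m)) := by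
    rw [legPoly]
    push_cast
    rw [show 2 * (2 * (m : ℝ)) + 3 = 4 * (m : ℝ) + 3 from by ring]
  have hinv : C (2 * (m : ℝ) + 2) * C ((2 * (m : ℝ) + 2)⁻¹) = 1 := by
    rw [← C_mul, mul_inv_cancel₀ (by positivity), C_1]
  have hE : C (2 * (m : ℝ) + 2) * legPoly (2 * m + 2)
      = C (4 * (m : ℝ) + 3) * X * legPoly (2 * m + 1) - C (2 * (m : ℝ) + 1) * legPoly (2 * m) := by
    rw [hL, ← mul_assoc, hinv, one_mul]
  have hB : C (2 * (m : ℝ) + 2) * C (legendreP (2 * (m + 1)) 0)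
      = -(C (2 * (m : ℝ) + 1) * C (legendreP (2 * m) 0)) := by
    rw [← C_mul, aRec m, ← C_mul, C_neg]
  apply mul_left_cancel₀ (Polynomial.X_ne_zero (R := ℝ))
  linear_combination (-(C (2 * (m : ℝ) + 2))) * hQ1 + hE - hB + (-(C (2 * (m : ℝ) + 1))) * hQ0

theorem legendreW_recurrence :
    legendreW 0 = 0 ∧
      ∀ m : ℕ, 4 * ((m : ℝ) + 1) ^ 2 * legendreW (m + 1)
        = 2 * (4 * (m : ℝ) + 3) + (2 * (m : ℝ) + 1) ^ 2 * legendreW m := by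
  constructor
  · simp [legendreW, legendreP]
  · intro m
    rw [legW_eq (m + 1), legW_eq m]
    have heval : ∀ x : ℝ, (2 * (m : ℝ) + 2) * (legQ (m + 1)).eval x
        = (4 * (m : ℝ) + 3) * (legPoly (2 * m + 1)).eval x
          - (2 * (m : ℝ) + 1) * (legQ m).eval x := by
      intro x
      have h2 := congrArg (eval x) (keyQ m)
      simpa using h2
    have hax : ∀ x : ℝ, (2 * (m : ℝ) + 2) ^ 2 * ((legQ (m + 1)).eval x) ^ 2
        = (4 * (m : ℝ) + 3) ^ 2 * ((legPoly (2 * m + 1)).eval x) ^ 2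
          - 2 * (4 * (m : ℝ) + 3) * (2 * (m : ℝ) + 1)
              * ((legQ m).eval x * (legendreP (2 * m + 1) x))
          + (2 * (m : ℝ) + 1) ^ 2 * ((legQ m).eval x) ^ 2 := by
      intro x
      have h := heval x
      rw [legendreP_eval]
      linear_combination ((2 * (m : ℝ) + 2) * (legQ (m + 1)).eval x
        + (4 * (m : ℝ) + 3) * (legPoly (2 * m + 1)).eval x
        - (2 * (m : ℝ) + 1) * (legQ m).eval x) * h
    have i1 : IntervalIntegrable (fun x : ℝ => (4 * (m : ℝ) + 3) ^ 2
        * ((legPoly (2 * m + 1)).eval x) ^ 2) volume (-1) 1 :=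
      (continuous_const.mul ((legPoly (2 * m + 1)).continuous.pow 2)).intervalIntegrable _ _
    have i2 : IntervalIntegrable (fun x : ℝ => 2 * (4 * (m : ℝ) + 3) * (2 * (m : ℝ) + 1)
        * ((legQ m).eval x * (legendreP (2 * m + 1) x))) volume (-1) 1 := by
      have hc : Continuous (legendreP (2 * m + 1)) := by
        have : legendreP (2 * m + 1) = fun x => (legPoly (2 * m + 1)).eval x :=
          funext (legendreP_eval (2 * m + 1))
        rw [this]; exact (legPoly (2 * m + 1)).continuous
      exact (continuous_const.mul ((legQ m).continuous.mul hc)).intervalIntegrable _ _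
    have i3 : IntervalIntegrable (fun x : ℝ => (2 * (m : ℝ) + 1) ^ 2
        * ((legQ m).eval x) ^ 2) volume (-1) 1 :=
      (continuous_const.mul ((legQ m).continuous.pow 2)).intervalIntegrable _ _
    have hA : (∫ x in (-1 : ℝ)..1, ((legPoly (2 * m + 1)).eval x) ^ 2)
        = 2 / (4 * (m : ℝ) + 3) := by
      have h2 : (∫ x in (-1 : ℝ)..1, ((legPoly (2 * m + 1)).eval x) ^ 2)
          = ∫ x in (-1 : ℝ)..1, (legPoly (2 * m + 1)).eval x * legendreP (2 * m + 1) x := by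
        apply intervalIntegral.integral_congr
        intro x _
        show ((legPoly (2 * m + 1)).eval x) ^ 2
          = (legPoly (2 * m + 1)).eval x * legendreP (2 * m + 1) x
        rw [legendreP_eval]
        ring
      rw [h2, integral_legPoly_sq]
      push_cast
      ring_nf
    have hAB : (∫ x in (-1 : ℝ)..1, (legQ m).eval x * legendreP (2 * m + 1) x) = 0 :=
      integral_poly_mul_eq_zero (legQ m) (2 * m + 1) (fun k hk => legQ_coeff m k (by omega))
    calc 4 * ((m : ℝ) + 1) ^ 2 * ∫ x in (-1 : ℝ)..1, ((legQ (m + 1)).eval x) ^ 2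
        = ∫ x in (-1 : ℝ)..1, (2 * (m : ℝ) + 2) ^ 2 * ((legQ (m + 1)).eval x) ^ 2 := by
          rw [intervalIntegral.integral_const_mul]
          ring
      _ = ∫ x in (-1 : ℝ)..1, ((4 * (m : ℝ) + 3) ^ 2 * ((legPoly (2 * m + 1)).eval x) ^ 2
            - 2 * (4 * (m : ℝ) + 3) * (2 * (m : ℝ) + 1)
                * ((legQ m).eval x * (legendreP (2 * m + 1) x))
            + (2 * (m : ℝ) + 1) ^ 2 * ((legQ m).eval x) ^ 2) :=
          intervalIntegral.integral_congr (fun x _ => hax x)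
      _ = (4 * (m : ℝ) + 3) ^ 2 * (∫ x in (-1 : ℝ)..1, ((legPoly (2 * m + 1)).eval x) ^ 2)
            - 2 * (4 * (m : ℝ) + 3) * (2 * (m : ℝ) + 1)
                * (∫ x in (-1 : ℝ)..1, (legQ m).eval x * legendreP (2 * m + 1) x)
            + (2 * (m : ℝ) + 1) ^ 2 * (∫ x in (-1 : ℝ)..1, ((legQ m).eval x) ^ 2) := by
          rw [intervalIntegral.integral_add (i1.sub i2) i3, intervalIntegral.integral_sub i1 i2,
            intervalIntegral.integral_const_mul, intervalIntegral.integral_const_mul,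
            intervalIntegral.integral_const_mul]
      _ = 2 * (4 * (m : ℝ) + 3) + (2 * (m : ℝ) + 1) ^ 2
            * ∫ x in (-1 : ℝ)..1, ((legQ m).eval x) ^ 2 := by
          rw [hA, hAB]
          have h43 : (4 * (m : ℝ) + 3) ≠ 0 := by positivity
          field_simp
          ring
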